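/- If t = u holds in the monoid SJω, then there exist n, m ∈ ℕ such that c^n t = c^m u holds in SKω, where c is the circle element. -/

import Mathlib

/-- Generators of the monoid `SKω`: cups `δ_k`, caps `γ_k` and crossings `σ_k`,
indexed by positive natural numbers. -/
inductive SKGen : Type
  | cup : ℕ+ → SKGen
  | cap : ℕ+ → SKGen
  | cross : ℕ+ → SKGen

open FreeMonoid in
/-- The defining relations of the monoid `SKω`. -/
inductive SKRel : FreeMonoid SKGen → FreeMonoid SKGen → Prop
  | cup (j k : ℕ+) (h : j ≤ k) :
      SKRel (of (.cup k) * of (.cup j)) (of (.cup j) * of (.cup (k + 2)))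
  | cap (j k : ℕ+) (h : j ≤ k) :
      SKRel (of (.cap j) * of (.cap k)) (of (.cap (k + 2)) * of (.cap j))
  | cup_cap_one (j k : ℕ+) (h : j ≤ k) :
      SKRel (of (.cup (k + 2)) * of (.cap j)) (of (.cap j) * of (.cup k))
  | cap_cup_one (j k : ℕ+) (h : j ≤ k) :
      SKRel (of (.cup j) * of (.cap (k + 2))) (of (.cap k) * of (.cup j))
  | cup_cap (i : ℕ+) :
      SKRel (of (.cup i) * of (.cap (i + 1))) 1
  | sigma (j k : ℕ+) (h : j ≤ k) :
      SKRel (of (.cross (k + 2)) * of (.cross j)) (of (.cross j) * of (.cross (k + 2)))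
  | sigma_two (i : ℕ+) :
      SKRel (of (.cross i) * of (.cross i)) 1
  | sigma_three (i : ℕ+) :
      SKRel (of (.cross (i + 1)) * of (.cross i) * of (.cross (i + 1)))
            (of (.cross i) * of (.cross (i + 1)) * of (.cross i))
  | sigma_cup_one (j k : ℕ+) (h : j ≤ k) :
      SKRel (of (.cup (k + 2)) * of (.cross j)) (of (.cross j) * of (.cup (k + 2)))
  | sigma_cup_two (j k : ℕ+) (h : j ≤ k) :
      SKRel (of (.cup j) * of (.cross (k + 2))) (of (.cross k) * of (.cup j))
  | sigma_cup_three (i : ℕ+) :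
      SKRel (of (.cup i) * of (.cross i)) (of (.cup i))
  | sigma_cup_four (i : ℕ+) :
      SKRel (of (.cup (i + 1)) * of (.cross i)) (of (.cup i) * of (.cross (i + 1)))
  | sigma_cap_one (j k : ℕ+) (h : j ≤ k) :
      SKRel (of (.cross j) * of (.cap (k + 2))) (of (.cap (k + 2)) * of (.cross j))
  | sigma_cap_two (j k : ℕ+) (h : j ≤ k) :
      SKRel (of (.cross (k + 2)) * of (.cap j)) (of (.cap j) * of (.cross k))
  | sigma_cap_three (i : ℕ+) :
      SKRel (of (.cross i) * of (.cap i)) (of (.cap i))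
  | sigma_cap_four (i : ℕ+) :
      SKRel (of (.cross i) * of (.cap (i + 1))) (of (.cross (i + 1)) * of (.cap i))

/-- The monoid `SKω`, presented by cups, caps and crossings with the monoid, cup-cap,
σ, σ-cup and σ-cap equations. -/
def SKomega : Type := PresentedMonoid SKRel

instance : Monoid SKomega := by unfold SKomega; infer_instance

/-- The cup generator `δ_k` of `SKω`. -/
def SKomega.cup (k : ℕ+) : SKomega := PresentedMonoid.of SKRel (SKGen.cup k)

/-- The cap generator `γ_k` of `SKω`. -/
def SKomega.cap (k : ℕ+) : SKomega := PresentedMonoid.of SKRel (SKGen.cap k)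

/-- The crossing generator `σ_k` of `SKω`. -/
def SKomega.cross (k : ℕ+) : SKomega := PresentedMonoid.of SKRel (SKGen.cross k)


/-- The circle element `c = δ_1 γ_1` of `SKω`. -/
def SKomega.circle : SKomega := SKomega.cup 1 * SKomega.cap 1

/-- The congruence on `SKω` generated by the additional equation `c = 1`. -/
def SJCon : Con SKomega := conGen (fun x y => x = SKomega.circle ∧ y = 1)

/-- The monoid `SJω`, obtained from `SKω` by imposing the additional equation `c = 1`. -/
def SJomega : Type := SJCon.Quotient

instance : Monoid SJomega := by unfold SJomega; infer_instance

/-- The canonical projection from `SKω` onto `SJω`. -/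
def toSJ : SKomega →* SJomega := SJCon.mk'

lemma skrel_eq {a b : FreeMonoid SKGen} (h : SKRel a b) :
    PresentedMonoid.mk SKRel a = PresentedMonoid.mk SKRel b :=
  Quotient.sound (ConGen.Rel.of a b h)

lemma sk_cup_mul (j k : ℕ+) (h : j ≤ k) :
    SKomega.cup k * SKomega.cup j = SKomega.cup j * SKomega.cup (k + 2) := by
  have e := skrel_eq (SKRel.cup j k h)
  simp only [map_mul] at e
  exact e

lemma sk_cap_mul (j k : ℕ+) (h : j ≤ k) :
    SKomega.cap j * SKomega.cap k = SKomega.cap (k + 2) * SKomega.cap j := by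
  have e := skrel_eq (SKRel.cap j k h)
  simp only [map_mul] at e
  exact e

lemma sk_cup_cap_one (j k : ℕ+) (h : j ≤ k) :
    SKomega.cup (k + 2) * SKomega.cap j = SKomega.cap j * SKomega.cup k := by
  have e := skrel_eq (SKRel.cup_cap_one j k h)
  simp only [map_mul] at e
  exact e

lemma sk_cap_cup_one (j k : ℕ+) (h : j ≤ k) :
    SKomega.cup j * SKomega.cap (k + 2) = SKomega.cap k * SKomega.cup j := by
  have e := skrel_eq (SKRel.cap_cup_one j k h)
  simp only [map_mul] at e
  exact e

lemma sk_sigma_cup_two (j k : ℕ+) (h : j ≤ k) :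
    SKomega.cup j * SKomega.cross (k + 2) = SKomega.cross k * SKomega.cup j := by
  have e := skrel_eq (SKRel.sigma_cup_two j k h)
  simp only [map_mul] at e
  exact e

lemma sk_sigma_cap_two (j k : ℕ+) (h : j ≤ k) :
    SKomega.cross (k + 2) * SKomega.cap j = SKomega.cap j * SKomega.cross k := by
  have e := skrel_eq (SKRel.sigma_cap_two j k h)
  simp only [map_mul] at e
  exact e

/-- The element of `SKomega` corresponding to a generator. -/
def SKGen.elem : SKGen → SKomega
  | .cup k => SKomega.cup k
  | .cap k => SKomega.cap k
  | .cross k => SKomega.cross k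

lemma circle_comm_gen (g : SKGen) :
    SKomega.circle * g.elem = g.elem * SKomega.circle := by
  cases g with
  | cup j =>
      show SKomega.circle * SKomega.cup j = SKomega.cup j * SKomega.circle
      unfold SKomega.circle
      rw [mul_assoc, ← mul_assoc (SKomega.cup j), sk_cup_mul 1 j j.one_le, mul_assoc,
        sk_cup_cap_one 1 j j.one_le]
  | cap j =>
      show SKomega.circle * SKomega.cap j = SKomega.cap j * SKomega.circle
      unfold SKomega.circle
      rw [mul_assoc, sk_cap_mul 1 j j.one_le, ← mul_assoc, sk_cap_cup_one 1 j j.one_le,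
        mul_assoc]
  | cross j =>
      show SKomega.circle * SKomega.cross j = SKomega.cross j * SKomega.circle
      unfold SKomega.circle
      symm
      rw [← mul_assoc, ← sk_sigma_cup_two 1 j j.one_le, mul_assoc,
        sk_sigma_cap_two 1 j j.one_le, ← mul_assoc]

lemma circle_central (x : SKomega) : SKomega.circle * x = x * SKomega.circle := by
  have hx : x ∈ Submonoid.closure (Set.range (PresentedMonoid.of SKRel)) := by
    rw [PresentedMonoid.closure_range_of]; trivial
  induction hx using Submonoid.closure_induction with
  | mem y hy =>
      obtain ⟨g, rfl⟩ := hy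
      cases g <;> first
        | exact circle_comm_gen (.cup ‹_›)
        | exact circle_comm_gen (.cap ‹_›)
        | exact circle_comm_gen (.cross ‹_›)
  | one => rw [mul_one, one_mul]
  | mul a b _ _ ha hb => rw [← mul_assoc, ha, mul_assoc, hb, mul_assoc]

lemma circle_pow_comm (p : ℕ) (x : SKomega) :
    SKomega.circle ^ p * x = x * SKomega.circle ^ p :=
  ((Commute.pow_left (circle_central x : Commute SKomega.circle x) p))

/-- If `t = u` holds in `SJω`, then there are `n, m ∈ ℕ` such that `cⁿ t = cᵐ u` holds
in `SKω`, where `c` is the circle element. -/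
theorem sjomega_eq_iff_circle_powers (t u : SKomega) (h : toSJ t = toSJ u) :
    ∃ n m : ℕ, SKomega.circle ^ n * t = SKomega.circle ^ m * u := by
  have h' : SJCon t u := (Con.eq SJCon).mp h
  have h'' : ConGen.Rel (fun x y => x = SKomega.circle ∧ y = 1) t u := h'
  clear h h'
  induction h'' with
  | of x y hxy =>
      refine ⟨0, 1, ?_⟩
      simp [hxy.1, hxy.2]
  | refl x => exact ⟨0, 0, rfl⟩
  | symm _ ih => obtain ⟨n, m, e⟩ := ih; exact ⟨m, n, e.symm⟩
  | trans _ _ ih1 ih2 =>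
      obtain ⟨n, m, e1⟩ := ih1
      obtain ⟨p, q, e2⟩ := ih2
      refine ⟨p + n, m + q, ?_⟩
      rw [pow_add, mul_assoc, e1, ← mul_assoc, ← pow_add, Nat.add_comm p m, pow_add,
        mul_assoc, e2, ← mul_assoc, ← pow_add]
  | mul _ _ ih1 ih2 =>
      obtain ⟨n, m, e1⟩ := ih1
      obtain ⟨p, q, e2⟩ := ih2
      have key : ∀ (a b : ℕ) (s r : SKomega), SKomega.circle ^ (a + b) * (s * r)
          = (SKomega.circle ^ a * s) * (SKomega.circle ^ b * r) := by
        intro a b s r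
        rw [pow_add, mul_assoc, ← mul_assoc (SKomega.circle ^ b) s r, circle_pow_comm b s,
          mul_assoc s, ← mul_assoc]
      exact ⟨n + p, m + q, by rw [key, key, e1, e2]⟩
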